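/- Averaged equicontinuity from L²-bounded discrete derivatives: with the notation of the previous statement, the piecewise constant interpolants ρ̄_τ satisfy ∫₀^{T−t} d(ρ̄_τ(s+t), ρ̄_τ(s)) ds ≤ (t + τ) ∫₀^T A_τ(r) dr for every 0 ≤ t ≤ T, where A_τ is the discrete derivative; consequently (1/h)∫₀^h ∫₀^{T−t} d(ρ̄_τ(s+t), ρ̄_τ(s)) ds dt ≤ (h/2 + τ) ∫₀^T A_τ(r) dr. -/

import Mathlib

open MeasureTheory

private lemma aux_arith (B t τ T : ℝ) (hτ : 0 < τ) (ht : 0 ≤ t) (hB : 0 ≤ B)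
    (hBT : B < T) :
    max (min (T - t) B - max 0 (B - t)) 0 * τ ≤ (t + τ) * (min (B + τ) T - B) := by
  rcases max_cases 0 (B - t) with ⟨e2, h2⟩ | ⟨e2, h2⟩ <;>
  rcases min_cases (T - t) B with ⟨e3, h3⟩ | ⟨e3, h3⟩ <;>
  rcases min_cases (B + τ) T with ⟨e1, h1⟩ | ⟨e1, h1⟩ <;>
  rcases max_cases (min (T - t) B - max 0 (B - t)) 0 with ⟨e4, h4⟩ | ⟨e4, h4⟩ <;>
  rw [e2] at * <;> rw [e3] at * <;> rw [e1, e4] <;> nlinarith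

private lemma rhs_eq {X : Type*} [MetricSpace X] (ρ : ℕ → X) (τ T : ℝ)
    (hτ : 0 < τ) (hT : 0 < T) :
    (∫ r in Set.Ioc (0 : ℝ) T, dist (ρ (⌈r / τ⌉₊ - 1)) (ρ ⌈r / τ⌉₊) / τ)
      = ∑ k ∈ Finset.Icc 1 ⌈T / τ⌉₊,
          dist (ρ (k - 1)) (ρ k) / τ * (min ((k : ℝ) * τ) T - ((k : ℝ) - 1) * τ) := by
  set N := ⌈T / τ⌉₊ with hN
  set A : ℝ → ℝ := fun r => dist (ρ (⌈r / τ⌉₊ - 1)) (ρ ⌈r / τ⌉₊) / τ with hA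
  set c : ℕ → ℝ := fun k => min ((k : ℝ) * τ) T with hc
  have hkτ : ∀ k : ℕ, k < N → (k : ℝ) * τ < T := by
    intro k hk
    have : (k : ℝ) < T / τ := Nat.lt_ceil.mp hk
    exact (lt_div_iff₀ hτ).mp this
  have hc0 : c 0 = 0 := by simp [hc, min_eq_left hT.le]
  have hcN : c N = T := by
    have : T / τ ≤ (N : ℝ) := Nat.le_ceil _
    have : T ≤ (N : ℝ) * τ := (div_le_iff₀ hτ).mp this
    simp [hc, min_eq_right this]
  have hcle : ∀ k : ℕ, c k ≤ c (k + 1) := by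
    intro k
    apply min_le_min _ le_rfl
    push_cast
    nlinarith
  have hkey : ∀ k : ℕ, k < N →
      Set.EqOn A (fun _ => dist (ρ k) (ρ (k + 1)) / τ) (Set.Ioc (c k) (c (k + 1))) := by
    intro k hk r hr
    obtain ⟨hr1, hr2⟩ := hr
    have hck : c k = (k : ℝ) * τ := min_eq_left (hkτ k hk).le
    rw [hck] at hr1
    have hr2' : r ≤ ((k : ℝ) + 1) * τ := le_trans hr2 (by push_cast [hc]; exact min_le_left _ _)
    have hceil : ⌈r / τ⌉₊ = k + 1 := by
      rw [Nat.ceil_eq_iff (Nat.succ_ne_zero k)]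
      constructor
      · push_cast
        exact (lt_div_iff₀ hτ).mpr hr1
      · push_cast
        exact (div_le_iff₀ hτ).mpr hr2'
    simp [hA, hceil]
  have hint : ∀ k < N, IntervalIntegrable A volume (c k) (c (k + 1)) := by
    intro k hk
    rw [intervalIntegrable_iff_integrableOn_Ioc_of_le (hcle k)]
    exact (integrableOn_const measure_Ioc_lt_top.ne).congr_fun
      (hkey k hk).symm measurableSet_Ioc
  have hsum := intervalIntegral.sum_integral_adjacent_intervals (μ := volume) (a := c)
    (n := N) hint
  have step : ∀ k < N, (∫ x in (c k)..(c (k + 1)), A x)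
      = dist (ρ k) (ρ (k + 1)) / τ * (min (((k : ℝ) + 1) * τ) T - (k : ℝ) * τ) := by
    intro k hk
    rw [intervalIntegral.integral_of_le (hcle k),
      setIntegral_congr_fun measurableSet_Ioc (hkey k hk), setIntegral_const,
      Real.volume_real_Ioc_of_le (hcle k), smul_eq_mul]
    have hck : c k = (k : ℝ) * τ := min_eq_left (hkτ k hk).le
    rw [hck]
    push_cast [hc]
    ring
  calc (∫ r in Set.Ioc (0 : ℝ) T, A r) = ∫ x in (c 0)..(c N), A x := by
        rw [hc0, hcN, intervalIntegral.integral_of_le hT.le]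
    _ = ∑ k ∈ Finset.range N, ∫ x in (c k)..(c (k + 1)), A x := hsum.symm
    _ = ∑ k ∈ Finset.range N,
          dist (ρ k) (ρ (k + 1)) / τ * (min (((k : ℝ) + 1) * τ) T - (k : ℝ) * τ) :=
        Finset.sum_congr rfl fun k hk => step k (Finset.mem_range.mp hk)
    _ = ∑ k ∈ Finset.Icc 1 N,
          dist (ρ (k - 1)) (ρ k) / τ * (min ((k : ℝ) * τ) T - ((k : ℝ) - 1) * τ) := by
        rw [← Finset.Ico_add_one_right_eq_Icc, Finset.sum_Ico_eq_sum_range]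
        apply Finset.sum_congr (by norm_num)
        intro i _
        have h1 : 1 + i - 1 = i := by omega
        rw [h1]
        push_cast
        ring_nf

private lemma ptwise {X : Type*} [MetricSpace X] (ρ : ℕ → X) (τ T t : ℝ)
    (hτ : 0 < τ) (ht : 0 ≤ t) (s : ℝ) (hs0 : 0 < s) (hsT : s + t ≤ T) :
    dist (ρ ⌈(s + t) / τ⌉₊) (ρ ⌈s / τ⌉₊) ≤
      ∑ k ∈ Finset.Icc 1 ⌈T / τ⌉₊,
        (Set.Ioc (((k : ℝ) - 1) * τ - t) (((k : ℝ) - 1) * τ)).indicator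
          (fun _ => dist (ρ (k - 1)) (ρ k)) s := by
  set N := ⌈T / τ⌉₊ with hN
  set m := ⌈s / τ⌉₊ with hm
  set n := ⌈(s + t) / τ⌉₊ with hn
  have hmn : m ≤ n := Nat.ceil_le_ceil (by gcongr <;> linarith)
  have hnN : n ≤ N := Nat.ceil_le_ceil (by gcongr <;> linarith)
  have tri := dist_le_range_sum_dist (fun i => ρ (m + i)) (n - m)
  simp only [Nat.add_zero, Nat.add_sub_cancel' hmn] at tri
  have hterm : ∀ i ∈ Finset.range (n - m),
      dist (ρ (m + i)) (ρ (m + i + 1)) =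
        (Set.Ioc (((m + 1 + i : ℕ) - 1 : ℝ) * τ - t) (((m + 1 + i : ℕ) - 1 : ℝ) * τ)).indicator
          (fun _ => dist (ρ (m + 1 + i - 1)) (ρ (m + 1 + i))) s := by
    intro i hi
    have hilt : m + i < n := by
      have := Finset.mem_range.mp hi
      omega
    have him : ((m + i : ℕ) : ℝ) < (s + t) / τ := Nat.lt_ceil.mp hilt
    have h2 : ((m : ℝ) + i) * τ < s + t := by
      have := (lt_div_iff₀ hτ).mp him
      push_cast at this
      linarith
    have h1 : s ≤ ((m : ℝ) + i) * τ := by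
      have hsm : s / τ ≤ (m : ℝ) := Nat.le_ceil _
      have hsm' : s ≤ (m : ℝ) * τ := (div_le_iff₀ hτ).mp hsm
      have : (0 : ℝ) ≤ (i : ℝ) * τ := by positivity
      nlinarith
    have hmem : s ∈ Set.Ioc (((m + 1 + i : ℕ) - 1 : ℝ) * τ - t) (((m + 1 + i : ℕ) - 1 : ℝ) * τ) := by
      constructor <;> push_cast <;> [linarith; linarith]
    rw [Set.indicator_of_mem hmem]
    have e1 : m + 1 + i - 1 = m + i := by omega
    have e2 : m + 1 + i = m + i + 1 := by omega
    rw [e1, e2]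
  have hsub : Finset.Ico (m + 1) (n + 1) ⊆ Finset.Icc 1 N := by
    intro k hk
    simp only [Finset.mem_Ico] at hk
    simp only [Finset.mem_Icc]
    omega
  have hd : n + 1 - (m + 1) = n - m := by omega
  calc dist (ρ n) (ρ m) = dist (ρ m) (ρ n) := dist_comm _ _
    _ ≤ ∑ i ∈ Finset.range (n - m), dist (ρ (m + i)) (ρ (m + i + 1)) := tri
    _ = ∑ i ∈ Finset.range (n - m),
          (Set.Ioc (((m + 1 + i : ℕ) - 1 : ℝ) * τ - t) (((m + 1 + i : ℕ) - 1 : ℝ) * τ)).indicator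
            (fun _ => dist (ρ (m + 1 + i - 1)) (ρ (m + 1 + i))) s :=
        Finset.sum_congr rfl hterm
    _ = ∑ k ∈ Finset.Ico (m + 1) (n + 1),
          (Set.Ioc (((k : ℕ) - 1 : ℝ) * τ - t) (((k : ℕ) - 1 : ℝ) * τ)).indicator
            (fun _ => dist (ρ (k - 1)) (ρ k)) s := by
        rw [Finset.sum_Ico_eq_sum_range, hd]
    _ ≤ ∑ k ∈ Finset.Icc 1 N,
          (Set.Ioc (((k : ℝ) - 1) * τ - t) (((k : ℝ) - 1) * τ)).indicator
            (fun _ => dist (ρ (k - 1)) (ρ k)) s :=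
        Finset.sum_le_sum_of_subset_of_nonneg hsub
          (fun k _ _ => Set.indicator_nonneg (fun _ _ => dist_nonneg) s)

private lemma part1 {X : Type*} [MetricSpace X] (ρ : ℕ → X) (τ T : ℝ)
    (hτ : 0 < τ) (hT : 0 < T) (t : ℝ) (ht : 0 ≤ t) (htT : t ≤ T) :
    (∫ s in Set.Ioc (0 : ℝ) (T - t), dist (ρ ⌈(s + t) / τ⌉₊) (ρ ⌈s / τ⌉₊)) ≤
      (t + τ) * ∫ r in Set.Ioc (0 : ℝ) T, dist (ρ (⌈r / τ⌉₊ - 1)) (ρ ⌈r / τ⌉₊) / τ := by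
  set N := ⌈T / τ⌉₊ with hN
  have hintk : ∀ k : ℕ, Integrable
      (fun s => (Set.Ioc (((k : ℝ) - 1) * τ - t) (((k : ℝ) - 1) * τ)).indicator
        (fun _ => dist (ρ (k - 1)) (ρ k)) s) (volume.restrict (Set.Ioc (0 : ℝ) (T - t))) := by
    intro k
    exact (integrableOn_const measure_Ioc_lt_top.ne).indicator measurableSet_Ioc
  have hle : (∫ s in Set.Ioc (0 : ℝ) (T - t), dist (ρ ⌈(s + t) / τ⌉₊) (ρ ⌈s / τ⌉₊)) ≤
      ∫ s in Set.Ioc (0 : ℝ) (T - t), ∑ k ∈ Finset.Icc 1 N,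
        (Set.Ioc (((k : ℝ) - 1) * τ - t) (((k : ℝ) - 1) * τ)).indicator
          (fun _ => dist (ρ (k - 1)) (ρ k)) s := by
    apply integral_mono_of_nonneg (ae_of_all _ fun s => dist_nonneg)
      (integrable_finset_sum _ fun k _ => hintk k)
    apply (ae_restrict_iff' measurableSet_Ioc).mpr
    apply ae_of_all
    intro s hs
    exact ptwise ρ τ T t hτ ht s hs.1 (by linarith [hs.2])
  have hg : (∫ s in Set.Ioc (0 : ℝ) (T - t), ∑ k ∈ Finset.Icc 1 N,
        (Set.Ioc (((k : ℝ) - 1) * τ - t) (((k : ℝ) - 1) * τ)).indicator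
          (fun _ => dist (ρ (k - 1)) (ρ k)) s)
      = ∑ k ∈ Finset.Icc 1 N, dist (ρ (k - 1)) (ρ k) *
          max (min (T - t) (((k : ℝ) - 1) * τ) - max 0 (((k : ℝ) - 1) * τ - t)) 0 := by
    rw [integral_finset_sum _ fun k _ => hintk k]
    apply Finset.sum_congr rfl
    intro k _
    rw [setIntegral_indicator measurableSet_Ioc, setIntegral_const, smul_eq_mul,
      Set.Ioc_inter_Ioc, Real.volume_real_Ioc]
    exact mul_comm _ _
  rw [rhs_eq ρ τ T hτ hT, Finset.mul_sum]
  refine le_trans hle (le_trans (le_of_eq hg) (Finset.sum_le_sum ?_))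
  intro k hk
  simp only [Finset.mem_Icc] at hk
  obtain ⟨hk1, hkN⟩ := hk
  have hB : (0 : ℝ) ≤ ((k : ℝ) - 1) * τ := by
    have : (1 : ℝ) ≤ (k : ℝ) := by exact_mod_cast hk1
    nlinarith
  have hBT : ((k : ℝ) - 1) * τ < T := by
    have : ((k - 1 : ℕ) : ℝ) < T / τ := Nat.lt_ceil.mp (by omega : k - 1 < N)
    have h' : ((k : ℝ) - 1) < T / τ := by
      rw [Nat.cast_sub hk1] at this
      push_cast at this
      linarith
    exact (lt_div_iff₀ hτ).mp h'
  have haux := aux_arith (((k : ℝ) - 1) * τ) t τ T hτ ht hB hBT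
  have hBτ : ((k : ℝ) - 1) * τ + τ = (k : ℝ) * τ := by ring
  rw [hBτ] at haux
  have hdτ : (0 : ℝ) ≤ dist (ρ (k - 1)) (ρ k) / τ := div_nonneg dist_nonneg hτ.le
  calc dist (ρ (k - 1)) (ρ k) *
        max (min (T - t) (((k : ℝ) - 1) * τ) - max 0 (((k : ℝ) - 1) * τ - t)) 0
      = dist (ρ (k - 1)) (ρ k) / τ *
          (max (min (T - t) (((k : ℝ) - 1) * τ) - max 0 (((k : ℝ) - 1) * τ - t)) 0 * τ) := by
        field_simp
    _ ≤ dist (ρ (k - 1)) (ρ k) / τ *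
          ((t + τ) * (min ((k : ℝ) * τ) T - ((k : ℝ) - 1) * τ)) :=
        mul_le_mul_of_nonneg_left haux hdτ
    _ = (t + τ) * (dist (ρ (k - 1)) (ρ k) / τ * (min ((k : ℝ) * τ) T - ((k : ℝ) - 1) * τ)) := by
        ring

theorem averaged_equicontinuity {X : Type*} [MetricSpace X]
    (ρ : ℕ → X) (τ T : ℝ) (hτ : 0 < τ) (hT : 0 < T) :
    (∀ t : ℝ, 0 ≤ t → t ≤ T →
      (∫ s in Set.Ioc (0 : ℝ) (T - t),
          dist (ρ ⌈(s + t) / τ⌉₊) (ρ ⌈s / τ⌉₊)) ≤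
        (t + τ) * ∫ r in Set.Ioc (0 : ℝ) T,
          dist (ρ (⌈r / τ⌉₊ - 1)) (ρ ⌈r / τ⌉₊) / τ) ∧
      ∀ h : ℝ, 0 < h →
        (1 / h) * (∫ t in Set.Ioc (0 : ℝ) h,
            (∫ s in Set.Ioc (0 : ℝ) (T - t),
              dist (ρ ⌈(s + t) / τ⌉₊) (ρ ⌈s / τ⌉₊))) ≤
          (h / 2 + τ) * ∫ r in Set.Ioc (0 : ℝ) T,
            dist (ρ (⌈r / τ⌉₊ - 1)) (ρ ⌈r / τ⌉₊) / τ := by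
  set C := ∫ r in Set.Ioc (0 : ℝ) T, dist (ρ (⌈r / τ⌉₊ - 1)) (ρ ⌈r / τ⌉₊) / τ with hC
  have hCnn : 0 ≤ C :=
    setIntegral_nonneg measurableSet_Ioc fun r _ => div_nonneg dist_nonneg hτ.le
  refine ⟨fun t ht htT => part1 ρ τ T hτ hT t ht htT, ?_⟩
  intro h hh
  set F : ℝ → ℝ := fun t => ∫ s in Set.Ioc (0 : ℝ) (T - t),
    dist (ρ ⌈(s + t) / τ⌉₊) (ρ ⌈s / τ⌉₊) with hF
  have hFnn : ∀ t : ℝ, 0 ≤ F t := fun t =>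
    setIntegral_nonneg measurableSet_Ioc fun s _ => dist_nonneg
  have hFb : ∀ t ∈ Set.Ioc (0 : ℝ) h, F t ≤ (t + τ) * C := by
    intro t htm
    obtain ⟨ht0, hth⟩ := htm
    by_cases htT : t ≤ T
    · exact part1 ρ τ T hτ hT t ht0.le htT
    · have hempty : Set.Ioc (0 : ℝ) (T - t) = ∅ := Set.Ioc_eq_empty (by push_neg at htT ⊢; linarith)
      have : F t = 0 := by rw [hF]; simp [hempty]
      rw [this]
      apply mul_nonneg (by linarith) hCnn
  have h1 : (∫ t in Set.Ioc (0 : ℝ) h, F t) ≤ ∫ t in Set.Ioc (0 : ℝ) h, (t + τ) * C := by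
    apply integral_mono_of_nonneg (ae_of_all _ hFnn)
    · have hcont : Continuous (fun t : ℝ => (t + τ) * C) := by fun_prop
      exact hcont.integrableOn_Ioc
    · exact (ae_restrict_iff' measurableSet_Ioc).mpr (ae_of_all _ hFb)
  have h2 : (∫ t in Set.Ioc (0 : ℝ) h, (t + τ) * C) = (h ^ 2 / 2 + τ * h) * C := by
    rw [← intervalIntegral.integral_of_le hh.le, intervalIntegral.integral_mul_const,
      intervalIntegral.integral_add intervalIntegral.intervalIntegrable_id
        intervalIntegrable_const,
      integral_id, intervalIntegral.integral_const]
    simp only [smul_eq_mul, sub_zero]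
    ring
  calc (1 / h) * (∫ t in Set.Ioc (0 : ℝ) h, F t)
      ≤ (1 / h) * ((h ^ 2 / 2 + τ * h) * C) := by
        apply mul_le_mul_of_nonneg_left (h1.trans_eq h2) (by positivity)
    _ = (h / 2 + τ) * C := by field_simp
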